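/- Let n ≥ 2 be an integer. Then (1/n) ∑_{j=1}^{n−1} 1/sin(jπ/n) ≥ (1/π) · log((1 + cos(π/n))/(1 − cos(π/n))) + 1/(n · sin(π/n)). -/

import Mathlib

open Real intervalIntegral

-- derivative of csc
lemma hasDerivAt_csc {x : ℝ} (hx : Real.sin x ≠ 0) :
    HasDerivAt (fun y => (Real.sin y)⁻¹) (-Real.cos x / Real.sin x ^ 2) x :=
  (Real.hasDerivAt_sin x).inv hx

lemma hasDerivAt_csc' {x : ℝ} (hx : Real.sin x ≠ 0) :
    HasDerivAt (fun y => -Real.cos y / Real.sin y ^ 2)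
      ((Real.sin x * Real.sin x ^ 2 - (-Real.cos x) * (2 * Real.sin x ^ 1 * Real.cos x)) /
        (Real.sin x ^ 2) ^ 2) x := by
  have h1 : HasDerivAt (fun y => -Real.cos y) (Real.sin x) x := by
    have h := (Real.hasDerivAt_cos x).neg; rw [neg_neg] at h; exact h
  have h2 : HasDerivAt (fun y => Real.sin y ^ 2) (2 * Real.sin x ^ 1 * Real.cos x) x := by
    exact ((Real.hasDerivAt_sin x).pow 2).congr_deriv (by norm_num)
  exact h1.div h2 (pow_ne_zero 2 hx)

lemma csc_convexOn :
    ConvexOn ℝ (Set.Ioo 0 Real.pi) (fun x => (Real.sin x)⁻¹) := by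
  have hs : ∀ x ∈ Set.Ioo (0:ℝ) Real.pi, 0 < Real.sin x := fun x hx =>
    Real.sin_pos_of_pos_of_lt_pi hx.1 hx.2
  have hopen : IsOpen (Set.Ioo (0:ℝ) Real.pi) := isOpen_Ioo
  have hint : interior (Set.Ioo (0:ℝ) Real.pi) = Set.Ioo 0 Real.pi := hopen.interior_eq
  have hderiv : ∀ x ∈ Set.Ioo (0:ℝ) Real.pi,
      deriv (fun y => (Real.sin y)⁻¹) x = -Real.cos x / Real.sin x ^ 2 := fun x hx =>
    (hasDerivAt_csc (hs x hx).ne').deriv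
  apply convexOn_of_deriv2_nonneg (convex_Ioo 0 Real.pi)
  · exact ContinuousOn.inv₀ (Real.continuous_sin.continuousOn) (fun x hx => (hs x hx).ne')
  · rw [hint]
    intro x hx
    exact (hasDerivAt_csc (hs x hx).ne').differentiableAt.differentiableWithinAt
  · rw [hint]
    intro x hx
    have : DifferentiableAt ℝ (fun y => -Real.cos y / Real.sin y ^ 2) x :=
      (hasDerivAt_csc' (hs x hx).ne').differentiableAt
    refine (this.congr_of_eventuallyEq ?_).differentiableWithinAt
    filter_upwards [hopen.mem_nhds hx] with y hy
    exact hderiv y hy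
  · rw [hint]
    intro x hx
    have heq : deriv (deriv (fun y => (Real.sin y)⁻¹)) x
        = (Real.sin x * Real.sin x ^ 2 - (-Real.cos x) * (2 * Real.sin x ^ 1 * Real.cos x)) /
          (Real.sin x ^ 2) ^ 2 := by
      have : deriv (fun y => (Real.sin y)⁻¹) =ᶠ[nhds x]
          (fun y => -Real.cos y / Real.sin y ^ 2) := by
        filter_upwards [hopen.mem_nhds hx] with y hy
        exact hderiv y hy
      rw [this.deriv_eq]
      exact (hasDerivAt_csc' (hs x hx).ne').deriv
    have hsx := hs x hx
    simp only [Function.iterate_succ, Function.iterate_zero, Function.comp_apply, id_eq]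
    rw [heq]
    have hns : (0:ℝ) < (Real.sin x ^ 2) ^ 2 := by positivity
    apply div_nonneg _ hns.le
    nlinarith [hsx, sq_nonneg (Real.cos x)]

lemma trapezoid {f : ℝ → ℝ} {a b : ℝ} (hab : a ≤ b)
    (hconv : ConvexOn ℝ (Set.Icc a b) f) (hcont : ContinuousOn f (Set.Icc a b)) :
    ∫ x in a..b, f x ≤ (b - a) * (f a + f b) / 2 := by
  rcases eq_or_lt_of_le hab with rfl | hlt
  · simp
  have hba : (0:ℝ) < b - a := sub_pos.2 hlt
  set m : ℝ := (f b - f a) / (b - a) with hm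
  have hle : ∀ x ∈ Set.Icc a b, f x ≤ (f a - m * a) + m * x := by
    intro x hx
    have h1 : (0:ℝ) ≤ (b - x) / (b - a) := div_nonneg (by linarith [hx.2]) hba.le
    have h2 : (0:ℝ) ≤ (x - a) / (b - a) := div_nonneg (by linarith [hx.1]) hba.le
    have h3 : (b - x) / (b - a) + (x - a) / (b - a) = 1 := by field_simp; ring
    have := hconv.2 (Set.left_mem_Icc.2 hab) (Set.right_mem_Icc.2 hab) h1 h2 h3
    simp only [smul_eq_mul] at this
    have h4 : (b - x) / (b - a) * a + (x - a) / (b - a) * b = x := by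
      field_simp; ring
    rw [h4] at this
    refine this.trans (le_of_eq ?_)
    rw [hm]
    field_simp
    ring
  have hcont' : ContinuousOn f (Set.uIcc a b) := by rwa [Set.uIcc_of_le hab]
  have hint : IntervalIntegrable f MeasureTheory.volume a b := hcont'.intervalIntegrable
  have hint2 : IntervalIntegrable (fun x => (f a - m * a) + m * x) MeasureTheory.volume a b := by
    apply Continuous.intervalIntegrable; continuity
  have hmono := intervalIntegral.integral_mono_on hab hint hint2 hle
  have hval : ∫ x in a..b, ((f a - m * a) + m * x) = (b - a) * (f a + f b) / 2 := by
    rw [intervalIntegral.integral_add (by apply Continuous.intervalIntegrable; continuity)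
      (by apply Continuous.intervalIntegrable; continuity)]
    rw [intervalIntegral.integral_const, intervalIntegral.integral_const_mul,
      integral_id]
    simp only [smul_eq_mul, hm]
    field_simp
    ring
  linarith [hmono, hval.le]

lemma integral_csc {a b : ℝ} (ha : a ∈ Set.Ioo 0 Real.pi) (hb : b ∈ Set.Ioo 0 Real.pi)
    (hab : a ≤ b) :
    ∫ x in a..b, (Real.sin x)⁻¹ =
      ((Real.log (1 - Real.cos b) - Real.log (1 + Real.cos b)) -
       (Real.log (1 - Real.cos a) - Real.log (1 + Real.cos a))) / 2 := by
  have hsub : Set.uIcc a b ⊆ Set.Ioo 0 Real.pi := by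
    rw [Set.uIcc_of_le hab]
    exact fun x hx => ⟨lt_of_lt_of_le ha.1 hx.1, lt_of_le_of_lt hx.2 hb.2⟩
  have key : ∀ x ∈ Set.uIcc a b,
      HasDerivAt (fun y => (Real.log (1 - Real.cos y) - Real.log (1 + Real.cos y)) / 2)
        ((Real.sin x)⁻¹) x := by
    intro x hx
    obtain ⟨hx0, hxπ⟩ := hsub hx
    have hsin : 0 < Real.sin x := Real.sin_pos_of_pos_of_lt_pi hx0 hxπ
    have hc1 : Real.cos x < 1 := by
      nlinarith [Real.sin_sq_add_cos_sq x, Real.cos_le_one x,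
        Real.neg_one_le_cos x]
    have hc2 : -1 < Real.cos x := by
      nlinarith [Real.sin_sq_add_cos_sq x]
    have h1 : (0:ℝ) < 1 - Real.cos x := by linarith
    have h2 : (0:ℝ) < 1 + Real.cos x := by linarith
    have d1 : HasDerivAt (fun y => 1 - Real.cos y) (Real.sin x) x := by
      simpa using (Real.hasDerivAt_cos x).const_sub 1
    have d2 : HasDerivAt (fun y => 1 + Real.cos y) (-Real.sin x) x := by
      simpa using (Real.hasDerivAt_cos x).const_add 1
    have l1 : HasDerivAt (fun y => Real.log (1 - Real.cos y))
        (Real.sin x / (1 - Real.cos x)) x := by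
      simpa using (d1.log h1.ne')
    have l2 : HasDerivAt (fun y => Real.log (1 + Real.cos y))
        (-Real.sin x / (1 + Real.cos x)) x := by
      simpa using (d2.log h2.ne')
    have := (l1.sub l2).div_const 2
    refine this.congr_deriv ?_
    have hsc := Real.sin_sq_add_cos_sq x
    field_simp
    nlinarith [hsc]
  have hcont : IntervalIntegrable (fun x => (Real.sin x)⁻¹) MeasureTheory.volume a b := by
    apply ContinuousOn.intervalIntegrable
    exact ContinuousOn.inv₀ Real.continuous_sin.continuousOn
      (fun x hx => (Real.sin_pos_of_pos_of_lt_pi (hsub hx).1 (hsub hx).2).ne')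
  rw [intervalIntegral.integral_eq_sub_of_hasDerivAt key hcont]
  ring

lemma sum_shift (g : ℕ → ℝ) (m : ℕ) :
    ∑ k ∈ Finset.range m, (g (k+1) + g (k+2)) =
      (∑ j ∈ Finset.Ico 1 (m+2), 2 * g j) - g 1 - g (m+1) := by
  induction m with
  | zero => simp [Finset.sum_Ico_eq_sum_range]; ring
  | succ m ih =>
    rw [Finset.sum_range_succ, ih,
      show m + 1 + 2 = (m + 2) + 1 by ring,
      Finset.sum_Ico_succ_top (by omega : 1 ≤ m + 2)]
    ring_nf

/-- Lower bound for the polygonal sum: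
`(1/n) ∑_{j=1}^{n−1} 1/sin(jπ/n)
  ≥ (1/π) log((1 + cos(π/n))/(1 − cos(π/n))) + 1/(n sin(π/n))`. -/
theorem polygon_sum_lower_bound
    (n : ℕ) (hn : 2 ≤ n) :
    ((1 : ℝ) / n) * ∑ j ∈ Finset.Ico 1 n, 1 / Real.sin ((j : ℝ) * Real.pi / n) ≥
      (1 / Real.pi) *
        Real.log ((1 + Real.cos (Real.pi / n)) / (1 - Real.cos (Real.pi / n))) +
      1 / (n * Real.sin (Real.pi / n)) := by
  have hπ : (0:ℝ) < Real.pi := Real.pi_pos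
  have hn0 : (0:ℝ) < n := by positivity
  set c : ℝ := Real.pi / n with hc
  have hc0 : 0 < c := div_pos hπ hn0
  set g : ℕ → ℝ := fun j => (Real.sin ((j:ℝ) * c))⁻¹ with hg
  have hmem : ∀ j : ℕ, 1 ≤ j → j ≤ n - 1 → (j:ℝ) * c ∈ Set.Ioo 0 Real.pi := by
    intro j h1 h2
    have hj1 : (1:ℝ) ≤ (j:ℝ) := by exact_mod_cast h1
    have hjn : (j:ℝ) < (n:ℝ) := by exact_mod_cast (by omega : j < n)
    constructor
    · nlinarith
    · have : (j:ℝ) * c < (n:ℝ) * c := by nlinarith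
      have hnc : (n:ℝ) * c = Real.pi := by rw [hc]; field_simp
      linarith [hnc ▸ this]
  set a : ℕ → ℝ := fun k => ((k:ℝ) + 1) * c with ha
  have hseg : ∀ k, k < n - 2 → Set.Icc (a k) (a (k+1)) ⊆ Set.Ioo 0 Real.pi := by
    intro k hk x hx
    have hlo := hmem (k+1) (by omega) (by omega)
    have hhi := hmem (k+2) (by omega) (by omega)
    have e1 : a k = ((k+1 : ℕ):ℝ) * c := by rw [ha]; push_cast; ring
    have e2 : a (k+1) = ((k+2 : ℕ):ℝ) * c := by rw [ha]; push_cast; ring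
    rw [e1] at hx
    rw [e2] at hx
    exact ⟨lt_of_lt_of_le hlo.1 hx.1, lt_of_le_of_lt hx.2 hhi.2⟩
  have hcsc_cont : ContinuousOn (fun x => (Real.sin x)⁻¹) (Set.Ioo 0 Real.pi) :=
    ContinuousOn.inv₀ Real.continuous_sin.continuousOn
      (fun x hx => (Real.sin_pos_of_pos_of_lt_pi hx.1 hx.2).ne')
  have hmono_a : ∀ k, a k ≤ a (k+1) := by
    intro k; rw [ha]; push_cast; nlinarith
  have hint : ∀ k, k < n - 2 →
      IntervalIntegrable (fun x => (Real.sin x)⁻¹) MeasureTheory.volume (a k) (a (k+1)) := by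
    intro k hk
    apply ContinuousOn.intervalIntegrable
    rw [Set.uIcc_of_le (hmono_a k)]
    exact hcsc_cont.mono (hseg k hk)
  have htel := intervalIntegral.sum_integral_adjacent_intervals
    (μ := MeasureTheory.volume) (a := a) (n := n - 2) hint
  have htrap : ∀ k, k < n - 2 →
      ∫ x in a k..a (k+1), (Real.sin x)⁻¹ ≤ c * (g (k+1) + g (k+2)) / 2 := by
    intro k hk
    have h := trapezoid (hmono_a k)
      (csc_convexOn.subset (hseg k hk) (convex_Icc _ _))
      (hcsc_cont.mono (hseg k hk))
    have e0 : a (k+1) - a k = c := by rw [ha]; push_cast; ring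
    have e1 : (Real.sin (a k))⁻¹ = g (k+1) := by rw [ha, hg]; push_cast; ring_nf
    have e2 : (Real.sin (a (k+1)))⁻¹ = g (k+2) := by rw [ha, hg]; push_cast; ring_nf
    calc ∫ x in a k..a (k+1), (Real.sin x)⁻¹
        ≤ (a (k+1) - a k) * ((Real.sin (a k))⁻¹ + (Real.sin (a (k+1)))⁻¹) / 2 := h
      _ = c * (g (k+1) + g (k+2)) / 2 := by rw [e0, e1, e2]
  set S : ℝ := ∑ j ∈ Finset.Ico 1 n, g j with hS
  have hsum_bound : ∫ x in (a 0)..(a (n-2)), (Real.sin x)⁻¹ ≤ c * (S - g 1) := by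
    rw [← htel]
    have h1 : ∑ k ∈ Finset.range (n-2), ∫ x in a k..a (k+1), (Real.sin x)⁻¹
        ≤ ∑ k ∈ Finset.range (n-2), c * (g (k+1) + g (k+2)) / 2 :=
      Finset.sum_le_sum (fun k hk => htrap k (Finset.mem_range.mp hk))
    have h2 : ∑ k ∈ Finset.range (n-2), c * (g (k+1) + g (k+2)) / 2
        = (c/2) * ∑ k ∈ Finset.range (n-2), (g (k+1) + g (k+2)) := by
      rw [Finset.mul_sum]; apply Finset.sum_congr rfl; intro k _; ring
    have h3 := sum_shift g (n-2)
    rw [show (n-2)+2 = n by omega, show (n-2)+1 = n-1 by omega] at h3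
    have h4 : ∑ j ∈ Finset.Ico 1 n, 2 * g j = 2 * S := by
      rw [hS, Finset.mul_sum]
    have h5 : g (n-1) = g 1 := by
      have e : ((n-1 : ℕ):ℝ) * c = Real.pi - c := by
        rw [Nat.cast_sub (by omega)]
        rw [hc]; push_cast; field_simp
      rw [hg]
      simp only [e, Real.sin_pi_sub, Nat.cast_one, one_mul]
    rw [h4, h5] at h3
    calc ∑ k ∈ Finset.range (n-2), ∫ x in a k..a (k+1), (Real.sin x)⁻¹
        ≤ (c/2) * ∑ k ∈ Finset.range (n-2), (g (k+1) + g (k+2)) := by rw [← h2]; exact h1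
      _ = (c/2) * (2 * S - g 1 - g 1) := by rw [h3]
      _ = c * (S - g 1) := by ring
  -- FTC value
  have hc_mem : c ∈ Set.Ioo 0 Real.pi := by
    have := hmem 1 le_rfl (by omega)
    simpa using this
  have hb_mem : ((n-1 : ℕ):ℝ) * c ∈ Set.Ioo 0 Real.pi := hmem (n-1) (by omega) le_rfl
  have he_a0 : a 0 = c := by rw [ha]; push_cast; ring
  have he_an : a (n-2) = ((n-1 : ℕ):ℝ) * c := by
    show (((n-2 : ℕ):ℝ) + 1) * c = ((n-1 : ℕ):ℝ) * c
    rw [Nat.cast_sub (by omega : 2 ≤ n), Nat.cast_sub (by omega : 1 ≤ n)]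
    push_cast; ring
  have he_pisub : ((n-1 : ℕ):ℝ) * c = Real.pi - c := by
    rw [Nat.cast_sub (by omega), hc]; push_cast; field_simp
  have hab : c ≤ ((n-1 : ℕ):ℝ) * c := by
    have : (1:ℝ) ≤ ((n-1 : ℕ):ℝ) := by exact_mod_cast (by omega : 1 ≤ n - 1)
    nlinarith
  have hcos1 : Real.cos c < 1 := by
    nlinarith [Real.sin_sq_add_cos_sq c, Real.sin_pos_of_pos_of_lt_pi hc_mem.1 hc_mem.2,
      Real.cos_le_one c]
  have hcos2 : -1 < Real.cos c := by
    nlinarith [Real.sin_sq_add_cos_sq c, Real.sin_pos_of_pos_of_lt_pi hc_mem.1 hc_mem.2]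
  have hftc : ∫ x in (a 0)..(a (n-2)), (Real.sin x)⁻¹
      = Real.log ((1 + Real.cos c) / (1 - Real.cos c)) := by
    rw [he_a0, he_an, integral_csc hc_mem hb_mem hab, he_pisub, Real.cos_pi_sub,
      Real.log_div (by linarith) (by linarith)]
    ring
  have key : Real.log ((1 + Real.cos c) / (1 - Real.cos c)) ≤ c * (S - g 1) := by
    rw [← hftc]; exact hsum_bound
  -- final algebra
  have hSeq : ∑ j ∈ Finset.Ico 1 n, 1 / Real.sin ((j : ℝ) * Real.pi / n) = S := by
    rw [hS]; apply Finset.sum_congr rfl; intro j _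
    rw [hg, one_div, hc, mul_div_assoc]
  rw [hSeq]
  have hg1 : 1 / ((n:ℝ) * Real.sin c) = (1/n) * g 1 := by
    rw [hg]; push_cast
    rw [one_mul, one_div, mul_inv]
    ring
  rw [hg1]
  have h2 : (1/Real.pi) * Real.log ((1 + Real.cos c) / (1 - Real.cos c))
      ≤ (1/(n:ℝ)) * (S - g 1) := by
    have hm := mul_le_mul_of_nonneg_left key (le_of_lt (by positivity : (0:ℝ) < 1/Real.pi))
    have : (1/Real.pi) * (c * (S - g 1)) = (1/(n:ℝ)) * (S - g 1) := by
      rw [hc]; field_simp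
    linarith [hm, this.le, this.ge]
  have h3 : (1/(n:ℝ)) * (S - g 1) = (1/(n:ℝ)) * S - (1/(n:ℝ)) * g 1 := by ring
  linarith
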